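/- Let n ≥ 3 be odd and suppose there exists s with 3 ≤ s ≤ n−1 such that n+s+1 and 2n+s+2 are both prime. Then the labeling of GP(n,1) given by: v_i ↦ i for 1 ≤ i ≤ n; u_1 ↦ n+s+1; u_i ↦ n+s+1−i for 2 ≤ i ≤ s; and u_i ↦ 2n+s+2−i for s+1 ≤ i ≤ n, is injective with values in {1,...,2n+1} and assigns coprime labels to every pair of adjacent vertices. -/
import Mathlib

/-- The prism graph `GP(n,1)`: two `n`-cycles `v` (inl) and `u` (inr) joined by a
perfect matching. -/
def prismGraph (n : ℕ) : SimpleGraph (ZMod n ⊕ ZMod n) :=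
  SimpleGraph.fromRel (fun x y =>
    (∃ i : ZMod n, x = Sum.inl i ∧ y = Sum.inl (i + 1)) ∨
    (∃ i : ZMod n, x = Sum.inr i ∧ y = Sum.inr (i + 1)) ∨
    (∃ i : ZMod n, x = Sum.inl i ∧ y = Sum.inr i))

/-- The labeling of Theorem (pair of primes `n+s+1`, `2n+s+2`): `v_i ↦ i`;
`u_1 ↦ n+s+1`; `u_i ↦ n+s+1-i` for `2 ≤ i ≤ s`; `u_i ↦ 2n+s+2-i` for
`s+1 ≤ i ≤ n` (vertex of value `j` represents index `j+1`). -/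
def prismLabel8 (n s : ℕ) : ZMod n ⊕ ZMod n → ℕ
  | Sum.inl i => i.val + 1
  | Sum.inr i =>
      if i.val = 0 then n + s + 1
      else if i.val + 1 ≤ s then n + s + 1 - (i.val + 1)
      else 2 * n + s + 2 - (i.val + 1)

private lemma coprime_consec (m : ℕ) : Nat.Coprime m (m + 1) := by simp

private lemma prime_coprime_lt {p m : ℕ} (hp : p.Prime) (hm : 0 < m) (hlt : m < p) :
    Nat.Coprime p m := by
  rw [Nat.Prime.coprime_iff_not_dvd hp]
  exact fun h => absurd (Nat.le_of_dvd hm h) (by omega)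

private lemma coprime_of_add_prime {p a b : ℕ} (hp : p.Prime) (hab : a + b = p)
    (ha : 0 < a) (hb : 0 < b) : Nat.Coprime a b := by
  have h1 : Nat.gcd a b ∣ p := hab ▸ Nat.dvd_add (Nat.gcd_dvd_left a b) (Nat.gcd_dvd_right a b)
  rcases hp.eq_one_or_self_of_dvd _ h1 with h | h
  · exact h
  · exfalso
    have h2 := Nat.le_of_dvd ha (h ▸ Nat.gcd_dvd_left a b)
    have h3 := Nat.le_of_dvd hb (h ▸ Nat.gcd_dvd_right a b)
    have := hp.two_le
    omega

theorem prism_coprime_labeling_of_prime_pair (n s : ℕ) (hn : 3 ≤ n)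
    (hodd : Odd n) (hs : 3 ≤ s) (hsn : s ≤ n - 1)
    (hp1 : Nat.Prime (n + s + 1)) (hp2 : Nat.Prime (2 * n + s + 2)) :
    Function.Injective (prismLabel8 n s) ∧
    (∀ x, prismLabel8 n s x ∈ Finset.Icc 1 (2 * n + 1)) ∧
    (∀ x y, (prismGraph n).Adj x y →
      Nat.Coprime (prismLabel8 n s x) (prismLabel8 n s y)) := by
  haveI : NeZero n := ⟨by omega⟩
  haveI : Fact (1 < n) := ⟨by omega⟩
  have hsucc : ∀ i : ZMod n, (i + 1).val = (i.val + 1) % n := by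
    intro i; rw [ZMod.val_add, ZMod.val_one]
  refine ⟨?_, ?_, ?_⟩
  · -- Injectivity
    intro x y hxy
    cases x with
    | inl i =>
      cases y with
      | inl j =>
        simp only [prismLabel8] at hxy
        exact congrArg Sum.inl (ZMod.val_injective n (by omega))
      | inr j =>
        exfalso
        have hi := ZMod.val_lt i; have hj := ZMod.val_lt j
        simp only [prismLabel8] at hxy
        split_ifs at hxy <;> omega
    | inr i =>
      cases y with
      | inl j =>
        exfalso
        have hi := ZMod.val_lt i; have hj := ZMod.val_lt j
        simp only [prismLabel8] at hxy
        split_ifs at hxy <;> omega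
      | inr j =>
        have hi := ZMod.val_lt i; have hj := ZMod.val_lt j
        simp only [prismLabel8] at hxy
        split_ifs at hxy <;>
          exact congrArg Sum.inr (ZMod.val_injective n (by omega))
  · -- Range
    intro x
    cases x with
    | inl i =>
      have hi := ZMod.val_lt i
      simp only [prismLabel8, Finset.mem_Icc]
      omega
    | inr i =>
      have hi := ZMod.val_lt i
      simp only [prismLabel8, Finset.mem_Icc]
      split_ifs <;> omega
  · -- Coprimality
    have key : ∀ x y, ((∃ i : ZMod n, x = Sum.inl i ∧ y = Sum.inl (i + 1)) ∨
        (∃ i : ZMod n, x = Sum.inr i ∧ y = Sum.inr (i + 1)) ∨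
        (∃ i : ZMod n, x = Sum.inl i ∧ y = Sum.inr i)) →
        Nat.Coprime (prismLabel8 n s x) (prismLabel8 n s y) := by
      rintro x y (⟨i, rfl, rfl⟩ | ⟨i, rfl, rfl⟩ | ⟨i, rfl, rfl⟩)
      · -- v-cycle
        have ha := ZMod.val_lt i
        simp only [prismLabel8, hsucc]
        rcases Nat.lt_or_ge (i.val + 1) n with h1 | h1
        · rw [Nat.mod_eq_of_lt h1]
          exact coprime_consec _
        · have h2 : i.val + 1 = n := by omega
          rw [h2, Nat.mod_self]
          simp
      · -- u-cycle
        have ha := ZMod.val_lt i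
        simp only [prismLabel8, hsucc]
        set a := i.val with haa
        rcases Nat.lt_or_ge (a + 1) n with h1 | h1
        · rw [Nat.mod_eq_of_lt h1]
          rcases Nat.eq_zero_or_pos a with h0 | h0
          · -- a = 0 : labels n+s+1 and n+s-1
            rw [if_pos h0, if_neg (by omega), if_pos (by omega)]
            exact prime_coprime_lt hp1 (by omega) (by omega)
          rcases Nat.lt_or_ge (a + 2) (s + 1) with h2 | h2
          · -- both in branch B: consecutive
            rw [if_neg (by omega), if_pos (by omega), if_neg (by omega), if_pos (by omega)]
            have e1 : n + s + 1 - (a + 1) = (n + s + 1 - (a + 1 + 1)) + 1 := by omega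
            rw [e1]
            exact (coprime_consec _).symm
          rcases Nat.lt_or_ge a s with h3 | h3
          · -- a + 1 = s : labels n+1 and 2n+1
            have hsa : a + 1 = s := by omega
            rw [if_neg (by omega), if_pos (by omega), if_neg (by omega), if_neg (by omega)]
            have e1 : n + s + 1 - (a + 1) = n + 1 := by omega
            have e2 : 2 * n + s + 2 - (a + 1 + 1) = 2 * n + 1 := by omega
            rw [e1, e2, show 2*n+1 = n + (n+1) by ring, Nat.coprime_add_self_right]
            simp [Nat.coprime_comm]
          · -- both in branch C: consecutive
            rw [if_neg (by omega), if_neg (by omega), if_neg (by omega), if_neg (by omega)]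
            have e1 : 2 * n + s + 2 - (a + 1) = (2 * n + s + 2 - (a + 1 + 1)) + 1 := by omega
            rw [e1]
            exact (coprime_consec _).symm
        · -- wrap : a = n - 1, labels n+s+2 and n+s+1
          have h2 : a + 1 = n := by omega
          rw [h2, Nat.mod_self]
          rw [if_neg (by omega), if_neg (by omega), if_pos rfl]
          have e1 : 2 * n + s + 2 - n = (n + s + 1) + 1 := by omega
          rw [e1]
          exact (coprime_consec _).symm
      · -- spokes
        have ha := ZMod.val_lt i
        simp only [prismLabel8]
        split_ifs with h0 h2
        · simp [h0]
        · exact coprime_of_add_prime hp1 (by omega) (by omega) (by omega)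
        · exact coprime_of_add_prime hp2 (by omega) (by omega) (by omega)
    intro x y hadj
    rw [prismGraph, SimpleGraph.fromRel_adj] at hadj
    rcases hadj with ⟨-, h | h⟩
    · exact key x y h
    · exact (key y x h).symm
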